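/- Let l > 0, let D = diag(d₁, d₂) be a real diagonal 2×2 matrix with d₁, d₂ > 0, let A and B be complex 2×2 matrices, and let λ ∈ ℂ. Then the following are equivalent: (i) there exists a twice continuously differentiable function y : [0, lπ] → ℂ², not identically zero, with y'(0) = y'(lπ) = 0 and λ·y(x) = D·y''(x) + A·y(x) + e^{-λ}·B·y(x) for all x ∈ [0, lπ]; (ii) there exists a nonnegative integer n such that det( λ·I + (n²/l²)·D − A − e^{-λ}·B ) = 0. -/

import Mathlib

open Real Set Matrix Complex

lemma hasDerivAt_cexp_mul (r : ℂ) (x : ℝ) :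
    HasDerivAt (fun t : ℝ => Complex.exp (r * t)) (r * Complex.exp (r * x)) x := by
  have h1 : HasDerivAt (fun z : ℂ => Complex.exp (r * z)) (r * Complex.exp (r * x)) (x : ℂ) := by
    have := ((Complex.hasDerivAt_exp (r * x)).comp (x:ℂ) ((hasDerivAt_id (x:ℂ)).const_mul r))
    simp [mul_comm] at this; exact this
  exact h1.comp_ofReal

lemma scalar_ode (l : ℝ) (hl : 0 < l) (μ : ℂ) (g : ℝ → ℂ) (hg : ContDiff ℝ 2 g)
    (h0 : deriv g 0 = 0) (h1 : deriv g (l * π) = 0)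
    (heq : ∀ x ∈ Icc (0:ℝ) (l * π), deriv (deriv g) x = μ * g x)
    (hμ : ∀ n : ℕ, μ ≠ -(n:ℂ)^2 / (l:ℂ)^2) :
    ∀ x ∈ Icc (0:ℝ) (l * π), g x = 0 := by
  have hlπ : 0 < l * π := mul_pos hl Real.pi_pos
  have hμ0 : μ ≠ 0 := by simpa using hμ 0
  obtain ⟨r, hr⟩ : ∃ r : ℂ, r ^ 2 = μ := IsAlgClosed.exists_pow_nat_eq μ (by norm_num)
  have hr0 : r ≠ 0 := by rintro rfl; simp at hr; exact hμ0 hr.symm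
  set c : ℝ → ℂ := fun x => (Complex.exp (r * x) + Complex.exp (-(r * x))) / 2 with hcdef
  set s : ℝ → ℂ := fun x => (Complex.exp (r * x) - Complex.exp (-(r * x))) / (2 * r) with hsdef
  have hc : ∀ x : ℝ, HasDerivAt c (μ * s x) x := by
    intro x
    have := ((hasDerivAt_cexp_mul r x).add (hasDerivAt_cexp_mul (-r) x)).div_const 2
    simp only [neg_mul] at this
    refine this.congr_deriv ?_
    rw [hsdef, ← hr]; field_simp; ring
  have hs : ∀ x : ℝ, HasDerivAt s (c x) x := by
    intro x
    have := ((hasDerivAt_cexp_mul r x).sub (hasDerivAt_cexp_mul (-r) x)).div_const (2 * r)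
    simp only [neg_mul] at this
    refine this.congr_deriv ?_
    rw [hcdef]; field_simp; ring
  have hEF : ∀ x : ℝ, Complex.exp (r * x) * Complex.exp (-(r * x)) = 1 := by
    intro x; rw [← Complex.exp_add]; simp
  have hW : ∀ x : ℝ, c x * c x - μ * (s x * s x) = 1 := by
    intro x
    rw [hcdef, hsdef, ← hr]
    field_simp
    linear_combination (4 : ℂ) * hEF x
  have hcont_c : Continuous c := by fun_prop
  have hcont_s : Continuous s := by fun_prop
  have hgd : Differentiable ℝ g := hg.differentiable (by norm_num)
  have hg2 : ContDiff ℝ ((1:WithTop ℕ∞) + 1) g := by norm_num; exact hg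
  have hgd' : Differentiable ℝ (deriv g) :=
    ((contDiff_succ_iff_deriv.mp hg2).2.2).differentiable (by norm_num)
  set u : ℝ → ℂ := fun x => g x - g 0 * c x with hudef
  set u' : ℝ → ℂ := fun x => deriv g x - g 0 * (μ * s x) with hu'def
  have hu : ∀ x : ℝ, HasDerivAt u (u' x) x := fun x =>
    ((hgd x).hasDerivAt).sub ((hc x).const_mul (g 0))
  have hu' : ∀ x ∈ Icc (0:ℝ) (l * π), HasDerivAt u' (μ * u x) x := by
    intro x hx
    have hd1 : HasDerivAt (deriv g) (deriv (deriv g) x) x := (hgd' x).hasDerivAt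
    rw [heq x hx] at hd1
    have hd2 : HasDerivAt (fun y : ℝ => g 0 * (μ * s y)) (g 0 * (μ * c x)) x :=
      ((hs x).const_mul μ).const_mul (g 0)
    have hd3 : HasDerivAt u' (μ * g x - g 0 * (μ * c x)) x := hd1.sub hd2
    convert hd3 using 1
    simp only [hudef]; ring
  -- Wronskians
  set W₁ : ℝ → ℂ := fun x => u' x * s x - u x * c x with hW₁def
  set W₂ : ℝ → ℂ := fun x => u' x * c x - u x * (μ * s x) with hW₂def
  have hW₁d : ∀ x ∈ Icc (0:ℝ) (l * π), HasDerivAt W₁ 0 x := by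
    intro x hx
    have h := ((hu' x hx).mul (hs x)).sub ((hu x).mul (hc x))
    refine h.congr_deriv ?_; ring
  have hW₂d : ∀ x ∈ Icc (0:ℝ) (l * π), HasDerivAt W₂ 0 x := by
    intro x hx
    have h := ((hu' x hx).mul (hc x)).sub ((hu x).mul ((hs x).const_mul μ))
    refine h.congr_deriv ?_; ring
  have hs0 : s 0 = 0 := by simp [hsdef]
  have hc0 : c 0 = 1 := by simp [hcdef]
  have hu0 : u 0 = 0 := by simp [hudef, hc0]
  have hu'0 : u' 0 = 0 := by simp [hu'def, hs0, h0]
  have hW₁0 : ∀ x ∈ Icc (0:ℝ) (l * π), W₁ x = 0 := by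
    intro x hx
    have := constant_of_has_deriv_right_zero (f := W₁) (a := 0) (b := l * π)
      (by
        apply Continuous.continuousOn
        apply Continuous.sub (Continuous.mul ?_ hcont_s) (Continuous.mul ?_ hcont_c)
        · exact hgd'.continuous.sub (continuous_const.mul (continuous_const.mul hcont_s))
        · exact hgd.continuous.sub (continuous_const.mul hcont_c))
      (fun y hy => ((hW₁d y ⟨hy.1, le_of_lt hy.2⟩).hasDerivWithinAt)) x hx
    rw [this]
    simp [hW₁def, hu0, hu'0, hs0]
  have hW₂0 : ∀ x ∈ Icc (0:ℝ) (l * π), W₂ x = 0 := by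
    intro x hx
    have := constant_of_has_deriv_right_zero (f := W₂) (a := 0) (b := l * π)
      (by
        apply Continuous.continuousOn
        apply Continuous.sub (Continuous.mul ?_ hcont_c) (Continuous.mul ?_ (continuous_const.mul hcont_s))
        · exact hgd'.continuous.sub (continuous_const.mul (continuous_const.mul hcont_s))
        · exact hgd.continuous.sub (continuous_const.mul hcont_c))
      (fun y hy => ((hW₂d y ⟨hy.1, le_of_lt hy.2⟩).hasDerivWithinAt)) x hx
    rw [this]
    simp [hW₂def, hu0, hu'0]
  have hueq : ∀ x ∈ Icc (0:ℝ) (l * π), u x = 0 := by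
    intro x hx
    have e1 := hW₁0 x hx
    have e2 := hW₂0 x hx
    have e3 := hW x
    simp only [hW₁def, hW₂def] at e1 e2
    linear_combination (-(c x)) * e1 + (s x) * e2 + (-(u x)) * e3
  have hgeq : ∀ x ∈ Icc (0:ℝ) (l * π), g x = g 0 * c x := by
    intro x hx
    have := hueq x hx
    simp only [hudef] at this
    linear_combination this
  -- endpoint derivative
  by_cases hg0 : g 0 = 0
  · intro x hx; rw [hgeq x hx, hg0, zero_mul]
  · exfalso
    have hmem : l * π ∈ Icc (0:ℝ) (l * π) := right_mem_Icc.mpr hlπ.le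
    have hud : UniqueDiffWithinAt ℝ (Icc (0:ℝ) (l * π)) (l * π) :=
      (uniqueDiffOn_Icc hlπ) _ hmem
    have hdw1 : HasDerivWithinAt (fun x => g 0 * c x) (deriv g (l * π))
        (Icc (0:ℝ) (l * π)) (l * π) :=
      ((hgd _).hasDerivAt.hasDerivWithinAt).congr
        (fun y hy => (hgeq y hy).symm) (hgeq _ hmem).symm
    have hdw2 : HasDerivWithinAt (fun x => g 0 * c x) (g 0 * (μ * s (l * π)))
        (Icc (0:ℝ) (l * π)) (l * π) := ((hc _).const_mul (g 0)).hasDerivWithinAt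
    have hder : g 0 * (μ * s (l * π)) = 0 := by
      rw [← hdw2.derivWithin hud, hdw1.derivWithin hud, h1]
    have hsl : s (l * π) = 0 := by
      rcases mul_eq_zero.mp hder with h | h
      · exact absurd h hg0
      · rcases mul_eq_zero.mp h with h | h
        · exact absurd h hμ0
        · exact h
    have hexp : Complex.exp (r * ((l:ℂ) * (π:ℂ))) = Complex.exp (-(r * ((l:ℂ) * (π:ℂ)))) := by
      have := hsl
      simp only [hsdef] at this
      rw [div_eq_zero_iff] at this
      rcases this with h | h
      · have := sub_eq_zero.mp h
        push_cast at this ⊢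
        convert this using 3
      · exact absurd h (by simp [hr0])
    have hone : Complex.exp (r * ((l:ℂ) * (π:ℂ)) - -(r * ((l:ℂ) * (π:ℂ)))) = 1 := by
      rw [Complex.exp_sub, hexp, div_self (Complex.exp_ne_zero _)]
    obtain ⟨k, hk⟩ := Complex.exp_eq_one_iff.mp hone
    have hπ : ((π:ℝ):ℂ) ≠ 0 := Complex.ofReal_ne_zero.mpr Real.pi_ne_zero
    have hlc : ((l:ℝ):ℂ) ≠ 0 := Complex.ofReal_ne_zero.mpr hl.ne'
    have hrl : r * (l:ℂ) = (k:ℂ) * Complex.I := by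
      have h2π : (2 * ((π:ℝ):ℂ)) ≠ 0 := by simp [hπ]
      apply mul_left_cancel₀ h2π
      linear_combination hk
    have hμval : μ * (l:ℂ)^2 = -((k:ℂ))^2 := by
      linear_combination (-((l:ℂ))^2) * hr + (r * (l:ℂ) + (k:ℂ) * Complex.I) * hrl + ((k:ℂ)^2) * Complex.I_sq
    have hnat : ((k.natAbs : ℂ))^2 = ((k:ℂ))^2 := by
      calc ((k.natAbs : ℂ))^2 = ((((k.natAbs : ℤ))^2 : ℤ) : ℂ) := by
            rw [Int.cast_pow]
            norm_cast
        _ = ((k^2 : ℤ) : ℂ) := by rw [Int.natAbs_sq k]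
        _ = ((k:ℂ))^2 := by push_cast; ring
    apply hμ k.natAbs
    rw [hnat]
    field_simp
    linear_combination hμval

lemma exists_quad_root (b c0 : ℂ) : ∃ z : ℂ, z * z + b * z + c0 = 0 := by
  obtain ⟨s, hs⟩ : ∃ s : ℂ, s ^ 2 = b ^ 2 - 4 * c0 := IsAlgClosed.exists_pow_nat_eq _ (by norm_num)
  refine ⟨(-b + s) / 2, ?_⟩
  have h4 : 4 * (((-b + s) / 2) * ((-b + s) / 2) + b * ((-b + s) / 2) + c0) = 0 := by
    ring_nf
    linear_combination hs
  linear_combination h4 / 4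

lemma dot_hasDerivAt (φ : Fin 2 → ℂ) (f : ℝ → Fin 2 → ℂ) (v : Fin 2 → ℂ) (x : ℝ)
    (hf : HasDerivAt f v x) : HasDerivAt (fun t => φ ⬝ᵥ f t) (φ ⬝ᵥ v) x := by
  simp only [dotProduct]
  exact HasDerivAt.fun_sum fun i _ => ((hasDerivAt_pi.mp hf i).const_mul (φ i))

lemma key2 (l : ℝ) (hl : 0 < l) (C : Matrix (Fin 2) (Fin 2) ℂ)
    (hC : ∀ n : ℕ, (C + (((n:ℂ)^2/(l:ℂ)^2)) • (1:Matrix (Fin 2) (Fin 2) ℂ)).det ≠ 0)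
    (y : ℝ → Fin 2 → ℂ) (hy : ContDiff ℝ 2 y) (hyd : Differentiable ℝ y)
    (hyd' : Differentiable ℝ (deriv y))
    (hb0 : deriv y 0 = 0) (hb1 : deriv y (l*π) = 0)
    (heq : ∀ x ∈ Icc (0:ℝ) (l*π), deriv (deriv y) x = C.mulVec (y x))
    (i j : Fin 2) (hij : i ≠ j) (hk : ∀ k : Fin 2, k = i ∨ k = j)
    (φ : Fin 2 → ℂ) (μ : ℂ) (hφi : φ i ≠ 0)
    (hzero : ∀ x ∈ Icc (0:ℝ) (l*π), φ i * y x i + φ j * y x j = 0)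
    (hφC : ∀ k, φ i * C i k + φ j * C j k = μ * φ k) :
    ∀ x ∈ Icc (0:ℝ) (l*π), y x = 0 := by
  set q : ℂ := φ j / φ i with hqdef
  set ν : ℂ := C j j - C j i * q with hνdef
  set u : Fin 2 → ℂ := fun k => if k = i then -q else 1 with hudef
  have hui : u i = -q := by simp [hudef]
  have huj : u j = 1 := by simp [hudef, hij.symm]
  have huniv : (Finset.univ : Finset (Fin 2)) = {i, j} := by
    ext m; simpa using hk m
  have hmv : ∀ (v : Fin 2 → ℂ) (k : Fin 2), (C *ᵥ v) k = C k i * v i + C k j * v j := by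
    intro v k
    show ∑ m, C k m * v m = _
    rw [huniv, Finset.sum_pair hij]
  have hCu : C *ᵥ u = ν • u := by
    funext k
    rcases hk k with rfl | rfl
    · rw [hmv, hui, huj, Pi.smul_apply, hui, smul_eq_mul]
      have ei := hφC k
      have ej := hφC j
      rw [hνdef, hqdef]
      field_simp
      ring_nf
      linear_combination (φ k) * ej - (φ j) * ei
    · rw [hmv, hui, huj, Pi.smul_apply, huj, smul_eq_mul, hνdef]
      ring
  have hu0 : u ≠ 0 := by
    intro h
    have := congr_fun h j
    rw [huj] at this
    simp at this
  have hνdet : (C - ν • 1).det = 0 := by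
    rw [← Matrix.exists_mulVec_eq_zero_iff]
    exact ⟨u, hu0, by
      rw [Matrix.sub_mulVec, Matrix.smul_mulVec, Matrix.one_mulVec, hCu, sub_self]⟩
  have hνn : ∀ n : ℕ, ν ≠ -(n:ℂ)^2/(l:ℂ)^2 := by
    intro n hn
    apply hC n
    rw [show C + ((n:ℂ)^2/(l:ℂ)^2) • (1:Matrix (Fin 2) (Fin 2) ℂ) = C - ν • 1 by
      rw [hn, neg_div, neg_smul, sub_neg_eq_add]]
    exact hνdet
  have hkd : ∀ (x : ℝ) (k : Fin 2), deriv (fun t => y t k) x = deriv y x k :=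
    fun x k => (hasDerivAt_pi.mp (hyd x).hasDerivAt k).deriv
  have hkd2 : ∀ (x : ℝ) (k : Fin 2), deriv (deriv (fun t => y t k)) x = deriv (deriv y) x k := by
    intro x k
    have hfun : (deriv (fun t => y t k)) = fun t => deriv y t k := funext fun t => hkd t k
    rw [hfun]
    exact (hasDerivAt_pi.mp (hyd' x).hasDerivAt k).deriv
  have hyi : ∀ x ∈ Icc (0:ℝ) (l*π), y x i = -q * y x j := by
    intro x hx
    have h := hzero x hx
    rw [hqdef]
    field_simp
    linear_combination h
  have hg : ∀ x ∈ Icc (0:ℝ) (l*π), y x j = 0 := by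
    apply scalar_ode l hl ν (fun x => y x j) ((contDiff_pi.mp hy) j)
    · rw [hkd 0 j, hb0]; rfl
    · rw [hkd _ j, hb1]; rfl
    · intro x hx
      rw [hkd2 x j, heq x hx, hmv, hyi x hx, hνdef]
      ring
    · exact hνn
  intro x hx
  funext k
  rcases hk k with rfl | rfl
  · rw [hyi x hx, hg x hx]
    simp
  · rw [hg x hx]
    simp

lemma key (l : ℝ) (hl : 0 < l) (C : Matrix (Fin 2) (Fin 2) ℂ)
    (hC : ∀ n : ℕ, (C + (((n:ℂ)^2/(l:ℂ)^2)) • (1:Matrix (Fin 2) (Fin 2) ℂ)).det ≠ 0)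
    (y : ℝ → Fin 2 → ℂ) (hy : ContDiff ℝ 2 y)
    (hb0 : deriv y 0 = 0) (hb1 : deriv y (l*π) = 0)
    (heq : ∀ x ∈ Icc (0:ℝ) (l*π), deriv (deriv y) x = C.mulVec (y x)) :
    ∀ x ∈ Icc (0:ℝ) (l*π), y x = 0 := by
  have hyd : Differentiable ℝ y := hy.differentiable (by norm_num)
  have hy2 : ContDiff ℝ ((1:WithTop ℕ∞) + 1) y := by norm_num; exact hy
  have hyd' : Differentiable ℝ (deriv y) :=
    ((contDiff_succ_iff_deriv.mp hy2).2.2).differentiable (by norm_num)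
  obtain ⟨μ, hμdet⟩ : ∃ μ : ℂ, (C - μ • 1).det = 0 := by
    obtain ⟨z, hz⟩ := exists_quad_root (-(C 0 0 + C 1 1)) (C 0 0 * C 1 1 - C 0 1 * C 1 0)
    refine ⟨z, ?_⟩
    rw [Matrix.det_fin_two]
    simp only [Matrix.sub_apply, Matrix.smul_apply, Matrix.one_apply, smul_eq_mul]
    norm_num
    linear_combination hz
  obtain ⟨φ, hφ0, hφ⟩ := Matrix.exists_mulVec_eq_zero_iff.mpr
    (show ((C - μ • 1)ᵀ).det = 0 by rw [Matrix.det_transpose]; exact hμdet)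
  rw [Matrix.mulVec_transpose] at hφ
  have hφC : ∀ k, φ 0 * C 0 k + φ 1 * C 1 k = μ * φ k := by
    intro k
    have h := congr_fun hφ k
    have hexp : (φ ᵥ* (C - μ • 1)) k = φ 0 * C 0 k + φ 1 * C 1 k - μ * φ k := by
      show ∑ m, φ m * (C - μ • 1) m k = _
      rw [Fin.sum_univ_two]
      simp only [Matrix.sub_apply, Matrix.smul_apply, Matrix.one_apply, smul_eq_mul]
      fin_cases k <;> norm_num <;> ring
    rw [hexp] at h
    have h0 : (0 : Fin 2 → ℂ) k = 0 := rfl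
    rw [h0] at h
    linear_combination h
  have hμn : ∀ n : ℕ, μ ≠ -(n:ℂ)^2/(l:ℂ)^2 := by
    intro n hn
    apply hC n
    rw [show C + ((n:ℂ)^2/(l:ℂ)^2) • (1:Matrix (Fin 2) (Fin 2) ℂ) = C - μ • 1 by
      rw [hn, neg_div, neg_smul, sub_neg_eq_add]]
    exact hμdet
  have hvmC : φ ᵥ* C = μ • φ := by
    funext k
    have hexp : (φ ᵥ* C) k = φ 0 * C 0 k + φ 1 * C 1 k := by
      show ∑ m, φ m * C m k = _
      rw [Fin.sum_univ_two]
    rw [hexp, hφC k, Pi.smul_apply, smul_eq_mul]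
  have hW : ∀ x ∈ Icc (0:ℝ) (l*π), φ ⬝ᵥ y x = 0 := by
    apply scalar_ode l hl μ (fun x => φ ⬝ᵥ y x)
    · simp only [dotProduct]
      exact ContDiff.sum fun i _ => contDiff_const.mul ((contDiff_pi.mp hy) i)
    · rw [(dot_hasDerivAt φ y _ 0 (hyd 0).hasDerivAt).deriv, hb0, dotProduct_zero]
    · rw [(dot_hasDerivAt φ y _ _ (hyd _).hasDerivAt).deriv, hb1, dotProduct_zero]
    · intro x hx
      have hD1 : deriv (fun t => φ ⬝ᵥ y t) = fun t => φ ⬝ᵥ deriv y t :=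
        funext fun t => (dot_hasDerivAt φ y _ t (hyd t).hasDerivAt).deriv
      rw [hD1, (dot_hasDerivAt φ (deriv y) _ x (hyd' x).hasDerivAt).deriv, heq x hx,
        Matrix.dotProduct_mulVec, hvmC, smul_dotProduct, smul_eq_mul]
    · exact hμn
  have hzero01 : ∀ x ∈ Icc (0:ℝ) (l*π), φ 0 * y x 0 + φ 1 * y x 1 = 0 := by
    intro x hx
    have h := hW x hx
    rw [show φ ⬝ᵥ y x = φ 0 * y x 0 + φ 1 * y x 1 by
      show ∑ m, φ m * y x m = _; rw [Fin.sum_univ_two]] at h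
    exact h
  obtain ⟨i, hφi⟩ : ∃ i, φ i ≠ 0 := by
    by_contra h
    push_neg at h
    exact hφ0 (funext fun k => h k)
  fin_cases i
  · exact key2 l hl C hC y hy hyd hyd' hb0 hb1 heq 0 1 (by decide) (by decide) φ μ hφi
      hzero01 hφC
  · exact key2 l hl C hC y hy hyd hyd' hb0 hb1 heq 1 0 (by decide) (by decide) φ μ hφi
      (fun x hx => by linear_combination hzero01 x hx)
      (fun k => by linear_combination hφC k)

lemma hasDerivAt_ccos_mul (a : ℂ) (x : ℝ) :
    HasDerivAt (fun t : ℝ => Complex.cos (a * t)) (-(a * Complex.sin (a * x))) x := by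
  have h1 : HasDerivAt (fun z : ℂ => Complex.cos (a * z)) (-(a * Complex.sin (a * x))) (x : ℂ) := by
    have := (Complex.hasDerivAt_cos (a * x)).comp (x:ℂ) ((hasDerivAt_id (x:ℂ)).const_mul a)
    simp [mul_comm] at this; exact this
  exact h1.comp_ofReal

lemma hasDerivAt_csin_mul (a : ℂ) (x : ℝ) :
    HasDerivAt (fun t : ℝ => Complex.sin (a * t)) (a * Complex.cos (a * x)) x := by
  have h1 : HasDerivAt (fun z : ℂ => Complex.sin (a * z)) (a * Complex.cos (a * x)) (x : ℂ) := by
    have := (Complex.hasDerivAt_sin (a * x)).comp (x:ℂ) ((hasDerivAt_id (x:ℂ)).const_mul a)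
    simp [mul_comm] at this; exact this
  exact h1.comp_ofReal

/-- `λ` is a characteristic value of the linearized delayed reaction–diffusion system
(i.e. the boundary value problem `λ y = D y'' + A y + e^{-λ} B y`, `y'(0) = y'(lπ) = 0`
has a nonzero solution) iff `det(λ I + (n²/l²) D − A − e^{-λ} B) = 0` for some `n : ℕ`. -/
theorem stmt_2 (l : ℝ) (hl : 0 < l) (d₁ d₂ : ℝ) (hd₁ : 0 < d₁) (hd₂ : 0 < d₂)
    (A B : Matrix (Fin 2) (Fin 2) ℂ) (lam : ℂ)
    (D : Matrix (Fin 2) (Fin 2) ℂ) (hD : D = Matrix.diagonal ![(d₁ : ℂ), (d₂ : ℂ)]) :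
    (∃ y : ℝ → (Fin 2 → ℂ), ContDiff ℝ 2 y ∧
        (∃ x ∈ Icc (0 : ℝ) (l * π), y x ≠ 0) ∧
        deriv y 0 = 0 ∧ deriv y (l * π) = 0 ∧
        (∀ x ∈ Icc (0 : ℝ) (l * π),
          lam • y x = D.mulVec (deriv (deriv y) x) + A.mulVec (y x)
            + Complex.exp (-lam) • B.mulVec (y x))) ↔
      (∃ n : ℕ, (lam • (1 : Matrix (Fin 2) (Fin 2) ℂ)
        + (((n : ℂ) ^ 2 / (l : ℂ) ^ 2)) • D - A - Complex.exp (-lam) • B).det = 0) := by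
  have hlπ : 0 < l * π := mul_pos hl Real.pi_pos
  have hlc : ((l:ℝ):ℂ) ≠ 0 := Complex.ofReal_ne_zero.mpr hl.ne'
  constructor
  · rintro ⟨y, hy, ⟨x₀, hx₀, hyx₀⟩, hb0, hb1, heqn⟩
    by_contra hn
    push_neg at hn
    set e : ℂ := Complex.exp (-lam) with hedef
    set M₀ : Matrix (Fin 2) (Fin 2) ℂ := lam • 1 - A - e • B with hM₀def
    set Dinv : Matrix (Fin 2) (Fin 2) ℂ := Matrix.diagonal ![(d₁:ℂ)⁻¹, (d₂:ℂ)⁻¹] with hDinvdef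
    have e1 : (d₁:ℂ) ≠ 0 := Complex.ofReal_ne_zero.mpr hd₁.ne'
    have e2 : (d₂:ℂ) ≠ 0 := Complex.ofReal_ne_zero.mpr hd₂.ne'
    have hDinvD : Dinv * D = 1 := by
      rw [hDinvdef, hD, Matrix.diagonal_mul_diagonal]
      ext i k
      fin_cases i <;> fin_cases k <;> simp [Matrix.one_apply, e1, e2]
    have hDDinv : D * Dinv = 1 := by
      rw [hDinvdef, hD, Matrix.diagonal_mul_diagonal]
      ext i k
      fin_cases i <;> fin_cases k <;> simp [Matrix.one_apply, e1, e2]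
    set C : Matrix (Fin 2) (Fin 2) ℂ := Dinv * M₀ with hCdef
    have heq' : ∀ x ∈ Icc (0:ℝ) (l*π), deriv (deriv y) x = C.mulVec (y x) := by
      intro x hx
      have h := heqn x hx
      have h2 : D.mulVec (deriv (deriv y) x) = M₀.mulVec (y x) := by
        rw [hM₀def, Matrix.sub_mulVec, Matrix.sub_mulVec, Matrix.smul_mulVec,
          Matrix.smul_mulVec, Matrix.one_mulVec, h]
        abel
      calc deriv (deriv y) x = (1 : Matrix (Fin 2) (Fin 2) ℂ).mulVec (deriv (deriv y) x) :=
            (Matrix.one_mulVec _).symm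
        _ = (Dinv * D).mulVec (deriv (deriv y) x) := by rw [hDinvD]
        _ = Dinv.mulVec (D.mulVec (deriv (deriv y) x)) := by rw [← Matrix.mulVec_mulVec]
        _ = Dinv.mulVec (M₀.mulVec (y x)) := by rw [h2]
        _ = C.mulVec (y x) := by rw [Matrix.mulVec_mulVec]
    have hCn : ∀ n : ℕ, (C + (((n:ℂ)^2/(l:ℂ)^2)) • (1:Matrix (Fin 2) (Fin 2) ℂ)).det ≠ 0 := by
      intro n hdet0
      apply hn n
      have hfac : lam • (1:Matrix (Fin 2) (Fin 2) ℂ) + ((n:ℂ)^2/(l:ℂ)^2) • D - A - e • B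
          = D * (C + ((n:ℂ)^2/(l:ℂ)^2) • 1) := by
        rw [Matrix.mul_add, Matrix.mul_smul, Matrix.mul_one, hCdef, ← Matrix.mul_assoc,
          hDDinv, Matrix.one_mul, hM₀def]
        abel
      rw [hfac, Matrix.det_mul, hdet0, mul_zero]
    exact hyx₀ (key l hl C hCn y hy hb0 hb1 heq' x₀ hx₀)
  · rintro ⟨n, hdet⟩
    obtain ⟨v, hv0, hv⟩ := Matrix.exists_mulVec_eq_zero_iff.mpr hdet
    set a : ℂ := (n:ℂ) / (l:ℂ) with hadef
    set f : ℝ → ℂ := fun x => Complex.cos (a * x) with hfdef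
    have hfc : ∀ x : ℝ, HasDerivAt f (-(a * Complex.sin (a * x))) x := fun x =>
      hasDerivAt_ccos_mul a x
    have hfs : ∀ x : ℝ, HasDerivAt (fun t : ℝ => -(a * Complex.sin (a * t)))
        (-(a ^ 2 * f x)) x := by
      intro x
      have := ((hasDerivAt_csin_mul a x).const_mul a).neg
      refine this.congr_deriv ?_
      rw [hfdef]; ring
    refine ⟨fun x => f x • v, ?_, ⟨0, ?_, ?_⟩, ?_, ?_, ?_⟩
    · have hlin : ContDiff ℝ 2 (fun x : ℝ => a * (x:ℂ)) :=
        contDiff_const.mul Complex.ofRealCLM.contDiff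
      have hf : ContDiff ℝ 2 f := (Complex.contDiff_cos.restrict_scalars ℝ).comp hlin
      exact contDiff_pi.mpr fun k => hf.mul contDiff_const
    · exact ⟨le_refl 0, hlπ.le⟩
    · simp only [hfdef]
      norm_num
      exact hv0
    · rw [funext fun x => ((hfc x).smul_const v).deriv]
      norm_num
    · rw [funext fun x => ((hfc x).smul_const v).deriv]
      have hsin : Complex.sin (a * ((l * π : ℝ) : ℂ)) = 0 := by
        rw [show a * ((l * π : ℝ) : ℂ) = (n:ℂ) * (π:ℂ) by
          rw [hadef]; push_cast; field_simp]
        rw [show ((n:ℂ) * (π:ℂ)) = ((n * π : ℝ) : ℂ) by push_cast; ring, ← Complex.ofReal_sin,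
          Real.sin_nat_mul_pi]
        simp
      show -(a * Complex.sin (a * ((l * π : ℝ) : ℂ))) • v = 0
      rw [hsin]
      simp
    · intro x hx
      have hdd : deriv (deriv fun x => f x • v) x = (-(a ^ 2 * f x)) • v := by
        rw [funext fun t => ((hfc t).smul_const v).deriv]
        exact ((hfs x).smul_const v).deriv
      rw [hdd]
      have hv' : ∀ k, lam * v k + a^2 * (D k 0 * v 0 + D k 1 * v 1)
          - (A k 0 * v 0 + A k 1 * v 1)
          - Complex.exp (-lam) * (B k 0 * v 0 + B k 1 * v 1) = 0 := by
        intro k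
        have hv2 := hv
        simp only [Matrix.add_mulVec, Matrix.sub_mulVec, Matrix.smul_mulVec,
          Matrix.one_mulVec] at hv2
        have h := congr_fun hv2 k
        simp only [Pi.add_apply, Pi.sub_apply, Pi.smul_apply, smul_eq_mul,
          Matrix.mulVec, dotProduct, Fin.sum_univ_two, Pi.zero_apply] at h
        rw [show a ^ 2 = (n:ℂ)^2 / (l:ℂ)^2 by rw [hadef, div_pow]]
        linear_combination h
      funext k
      simp only [Pi.add_apply, Pi.smul_apply, smul_eq_mul, Matrix.mulVec, dotProduct,
        Fin.sum_univ_two]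
      linear_combination (f x) * hv' k
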